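/- Let α > 0. The coefficient array β defined by β_{j,k} = 2^{−j/2} if k < 2^{j/(1+2α)} and β_{j,k} = 0 otherwise satisfies the weak Besov condition W_{2/(1+2α)}. -/

import Mathlib

open scoped BigOperators

/-- The weak Besov condition `W_{2/(1+2α)}`. -/
def CondW (β : ℕ → ℕ → ℝ) (α : ℝ) : Prop :=
  ∃ C : ℝ, ∀ u : ℝ, 0 < u →
    {q : ℕ × ℕ | q.2 < 2 ^ q.1 ∧ u < |β q.1 q.2|}.Finite ∧
      u ^ (2 / (1 + 2 * α)) *
        ({q : ℕ × ℕ | q.2 < 2 ^ q.1 ∧ u < |β q.1 q.2|}.ncard : ℝ) ≤ C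

/-- the array `β_{j,k} = 2^{−j/2}` for `k < 2^{j/(1+2α)}` and `0`
otherwise satisfies the weak Besov condition `W_{2/(1+2α)}`. -/
theorem stmt_14 (α : ℝ) (hα : 0 < α)
    (β : ℕ → ℕ → ℝ)
    (hβdef : ∀ j k : ℕ, β j k =
      if (k : ℝ) < (2 : ℝ) ^ ((j : ℝ) / (1 + 2 * α)) then (2 : ℝ) ^ (-(j : ℝ) / 2)
      else 0) :
    CondW β α := by
  classical
  have h1 : (0:ℝ) < 1 + 2 * α := by linarith
  set r : ℝ := (2:ℝ) ^ ((1:ℝ)/(1+2*α)) with hrdef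
  have hr1 : 1 < r := by
    rw [hrdef]
    exact (Real.one_lt_rpow_iff_of_pos two_pos).mpr
      (Or.inl ⟨one_lt_two, by positivity⟩)
  have hr0 : 0 < r - 1 := by linarith
  refine ⟨2 * r / (r - 1) + 1, fun u hu => ?_⟩
  set p : ℝ := 2 / (1 + 2 * α) with hpdef
  have hp0 : 0 < p := by positivity
  have hmem : ∀ q : ℕ × ℕ, q ∈ {q : ℕ × ℕ | q.2 < 2 ^ q.1 ∧ u < |β q.1 q.2|} →
      u < (2:ℝ) ^ (-(q.1:ℝ)/2) ∧ (q.2:ℝ) < (2:ℝ) ^ ((q.1:ℝ)/(1+2*α)) := by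
    rintro ⟨j, k⟩ ⟨-, h2⟩
    rw [hβdef] at h2
    by_cases hc : (k:ℝ) < (2:ℝ) ^ ((j:ℝ)/(1+2*α))
    · rw [if_pos hc, abs_of_pos (Real.rpow_pos_of_pos two_pos _)] at h2
      exact ⟨h2, hc⟩
    · rw [if_neg hc, abs_zero] at h2; linarith
  by_cases hu1 : 1 ≤ u
  · have hemp : {q : ℕ × ℕ | q.2 < 2 ^ q.1 ∧ u < |β q.1 q.2|} = ∅ := by
      ext q
      simp only [Set.mem_setOf_eq, Set.mem_empty_iff_false, iff_false, not_and]
      intro _ h2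
      have h := (hmem q ⟨‹_›, h2⟩).1
      have hle : (2:ℝ) ^ (-(q.1:ℝ)/2) ≤ 1 := by
        apply Real.rpow_le_one_of_one_le_of_nonpos one_le_two
        have : (0:ℝ) ≤ (q.1:ℝ) := Nat.cast_nonneg _
        linarith
      linarith
    rw [hemp]
    refine ⟨Set.finite_empty, ?_⟩
    have : (2:ℝ) * r / (r - 1) ≥ 0 := by positivity
    simp only [Set.ncard_empty, Nat.cast_zero, mul_zero]
    linarith
  · push_neg at hu1
    set J : ℕ := ⌊2 * Real.logb 2 (1/u)⌋₊ with hJ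
    have hlogpos : 0 < Real.logb 2 (1/u) :=
      Real.logb_pos one_lt_two ((one_lt_div hu).mpr hu1)
    have hjJ : ∀ j : ℕ, u < (2:ℝ) ^ (-(j:ℝ)/2) → j ≤ J := by
      intro j hj
      apply Nat.le_floor
      have h2 : Real.logb 2 u < -(j:ℝ)/2 := by
        have := Real.logb_lt_logb (b := 2) (by norm_num) hu hj
        rwa [Real.logb_rpow (by norm_num) (by norm_num)] at this
      rw [one_div, Real.logb_inv]
      linarith
    have huJ : u ≤ (2:ℝ) ^ (-(J:ℝ)/2) := by
      have h1' : (J:ℝ) ≤ 2 * Real.logb 2 (1/u) := Nat.floor_le (by positivity)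
      have h2' : Real.logb 2 u ≤ -(J:ℝ)/2 := by
        rw [one_div, Real.logb_inv] at h1'; linarith
      calc u = (2:ℝ) ^ Real.logb 2 u := (Real.rpow_logb two_pos (by norm_num) hu).symm
        _ ≤ _ := Real.rpow_le_rpow_of_exponent_le one_le_two h2'
    have hx : ∀ j : ℕ, (2:ℝ) ^ ((j:ℝ)/(1+2*α)) = r ^ j := by
      intro j
      rw [← Real.rpow_natCast r j, hrdef, ← Real.rpow_mul (by norm_num : (0:ℝ) ≤ 2)]
      congr 1
      ring
    set T : Finset (ℕ × ℕ) := (Finset.range (J+1)).biUnion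
      (fun j => ({j} : Finset ℕ) ×ˢ
        Finset.range (⌊(2:ℝ) ^ ((j:ℝ)/(1+2*α))⌋₊ + 1)) with hT
    have hsub : {q : ℕ × ℕ | q.2 < 2 ^ q.1 ∧ u < |β q.1 q.2|} ⊆ ↑T := by
      rintro ⟨j, k⟩ hq
      obtain ⟨h1', h2'⟩ := hmem _ hq
      simp only [hT, Finset.coe_biUnion, Set.mem_iUnion, Finset.mem_coe, Finset.mem_range,
        Finset.mem_product, Finset.mem_singleton]
      exact ⟨j, Nat.lt_succ_of_le (hjJ j h1'), rfl, Nat.lt_succ_of_le (Nat.le_floor h2'.le)⟩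
    refine ⟨Set.Finite.subset T.finite_toSet hsub, ?_⟩
    have hup : (0:ℝ) ≤ u ^ p := Real.rpow_nonneg hu.le p
    have hcard : ({q : ℕ × ℕ | q.2 < 2 ^ q.1 ∧ u < |β q.1 q.2|}.ncard : ℝ) ≤
        ∑ j ∈ Finset.range (J+1), ((⌊(2:ℝ) ^ ((j:ℝ)/(1+2*α))⌋₊ : ℝ) + 1) := by
      have hA : {q : ℕ × ℕ | q.2 < 2 ^ q.1 ∧ u < |β q.1 q.2|}.ncard ≤ T.card := by
        rw [← Set.ncard_coe_finset]
        exact Set.ncard_le_ncard hsub T.finite_toSet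
      have hB : T.card ≤ ∑ j ∈ Finset.range (J+1),
          (⌊(2:ℝ) ^ ((j:ℝ)/(1+2*α))⌋₊ + 1) := by
        refine le_trans Finset.card_biUnion_le ?_
        refine Finset.sum_le_sum fun j _ => ?_
        simp
      have := le_trans hA hB
      calc ({q : ℕ × ℕ | q.2 < 2 ^ q.1 ∧ u < |β q.1 q.2|}.ncard : ℝ)
          ≤ ((∑ j ∈ Finset.range (J+1),
              (⌊(2:ℝ) ^ ((j:ℝ)/(1+2*α))⌋₊ + 1) : ℕ) : ℝ) := by exact_mod_cast this
        _ = _ := by push_cast; ring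
    have hterm : ∀ j ∈ Finset.range (J+1),
        ((⌊(2:ℝ) ^ ((j:ℝ)/(1+2*α))⌋₊ : ℝ) + 1) ≤ 2 * r ^ j := by
      intro j _
      rw [hx j]
      have hrj : (0:ℝ) ≤ r ^ j := pow_nonneg (by linarith) j
      have h1' : ((⌊r ^ j⌋₊ : ℝ)) ≤ r ^ j := Nat.floor_le hrj
      have h2' : (1:ℝ) ≤ r ^ j := one_le_pow₀ hr1.le
      linarith
    have hsum : ∑ j ∈ Finset.range (J+1), ((⌊(2:ℝ) ^ ((j:ℝ)/(1+2*α))⌋₊ : ℝ) + 1) ≤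
        2 * r ^ (J+1) / (r-1) := by
      calc ∑ j ∈ Finset.range (J+1), ((⌊(2:ℝ) ^ ((j:ℝ)/(1+2*α))⌋₊ : ℝ) + 1)
          ≤ ∑ j ∈ Finset.range (J+1), 2 * r ^ j := Finset.sum_le_sum hterm
        _ = 2 * ((r ^ (J+1) - 1)/(r-1)) := by
            rw [← Finset.mul_sum, geom_sum_eq hr1.ne']
        _ ≤ 2 * r ^ (J+1) / (r-1) := by
            rw [mul_div_assoc]
            have hnum : r ^ (J+1) - 1 ≤ r ^ (J+1) := by linarith
            have hdiv : (r ^ (J+1) - 1) / (r-1) ≤ r ^ (J+1) / (r-1) :=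
              div_le_div_of_nonneg_right hnum hr0.le
            exact mul_le_mul_of_nonneg_left hdiv (by norm_num)
    have key : u ^ p * r ^ J ≤ 1 := by
      have h1' : u ^ p ≤ ((2:ℝ) ^ (-(J:ℝ)/2)) ^ p :=
        Real.rpow_le_rpow hu.le huJ hp0.le
      have h2' : ((2:ℝ) ^ (-(J:ℝ)/2)) ^ p * r ^ J = 1 := by
        rw [← Real.rpow_natCast r J, hrdef,
          ← Real.rpow_mul (by norm_num : (0:ℝ) ≤ 2),
          ← Real.rpow_mul (by norm_num : (0:ℝ) ≤ 2),
          ← Real.rpow_add two_pos,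
          show -(J:ℝ)/2 * p + 1/(1+2*α) * (J:ℝ) = 0 by
            rw [hpdef]; field_simp; ring]
        exact Real.rpow_zero 2
      have h3' : (0:ℝ) ≤ r ^ J := pow_nonneg (by linarith) J
      calc u ^ p * r ^ J ≤ ((2:ℝ) ^ (-(J:ℝ)/2)) ^ p * r ^ J :=
            mul_le_mul_of_nonneg_right h1' h3'
        _ = 1 := h2'
    have hfinal : u ^ p * (2 * r ^ (J+1) / (r-1)) ≤ 2 * r / (r-1) := by
      have heq : u ^ p * (2 * r ^ (J+1) / (r-1)) = 2 * r / (r-1) * (u ^ p * r ^ J) := by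
        rw [pow_succ]; field_simp
      rw [heq]
      have hC0 : (0:ℝ) ≤ 2 * r / (r-1) := by positivity
      calc 2 * r / (r-1) * (u ^ p * r ^ J) ≤ 2 * r / (r-1) * 1 :=
            mul_le_mul_of_nonneg_left key hC0
        _ = 2 * r / (r-1) := mul_one _
    calc u ^ p * ({q : ℕ × ℕ | q.2 < 2 ^ q.1 ∧ u < |β q.1 q.2|}.ncard : ℝ)
        ≤ u ^ p * (2 * r ^ (J+1) / (r-1)) := by
          exact mul_le_mul_of_nonneg_left (le_trans hcard hsum) hup
      _ ≤ 2 * r / (r-1) := hfinal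
      _ ≤ 2 * r / (r-1) + 1 := by linarith
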